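/- Ekeland's variational principle: Let (X, d) be a complete metric space and F : X → [0, ∞] lower semicontinuous with inf F(X) < ∞. If ε > 0 and x ∈ X satisfy F(x) ≤ inf F(X) + ε, then there exists v ∈ X with d(x, v) ≤ √ε and F(v) ≤ F(w) + √ε · d(v, w) for all w ∈ X. -/

import Mathlib

open MeasureTheory

/-- Ekeland's variational principle: if `(X, d)` is a complete metric space,
`F : X → [0, ∞]` is lower semicontinuous with finite infimum, `ε > 0` and
`F x ≤ inf F + ε`, then there is `v` with `d(x, v) ≤ √ε` and
`F v ≤ F w + √ε · d(v, w)` for all `w`. -/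
theorem ekeland_variational_principle
    {X : Type*} [MetricSpace X] [CompleteSpace X]
    (F : X → ENNReal) (hF : LowerSemicontinuous F)
    (hinf : (⨅ y, F y) < ⊤)
    (ε : ℝ) (hε : 0 < ε) (x : X)
    (hx : F x ≤ (⨅ y, F y) + ENNReal.ofReal ε) :
    ∃ v : X, dist x v ≤ Real.sqrt ε ∧
      ∀ w : X, F v ≤ F w + ENNReal.ofReal (Real.sqrt ε * dist v w) := by
  classical
  set L : ENNReal := ENNReal.ofReal (Real.sqrt ε) with hLdef
  have hsε : 0 < Real.sqrt ε := Real.sqrt_pos.2 hε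
  have hL0 : L ≠ 0 := by simp [hLdef, ENNReal.ofReal_pos.2 hsε, ne_of_gt]
  have hLtop : L ≠ ⊤ := ENNReal.ofReal_ne_top
  set m : ENNReal := ⨅ y, F y with hmdef
  have hm_ne : m ≠ ⊤ := hinf.ne
  -- key choice lemma
  have key : ∀ (n : ℕ) (z : X), ∃ y : X, (F y + L * edist z y ≤ F z) ∧
      ∀ u : X, F u + L * edist z u ≤ F z → F y ≤ F u + (2⁻¹ : ENNReal) ^ (n + 1) := by
    intro n z
    set S : Set X := {u | F u + L * edist z u ≤ F z} with hSdef
    have hzS : z ∈ S := by simp [hSdef]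
    by_cases htop : (⨅ u ∈ S, F u) = ⊤
    · refine ⟨z, hzS, fun u hu => ?_⟩
      have h' : (⨅ u ∈ S, F u) ≤ F u := iInf₂_le u hu
      rw [htop, top_le_iff] at h'
      simp [h']
    · have hlt : (⨅ u ∈ S, F u) < (⨅ u ∈ S, F u) + (2⁻¹ : ENNReal) ^ (n + 1) :=
        ENNReal.lt_add_right htop (pow_ne_zero _ (by norm_num))
      obtain ⟨y, hy'⟩ := iInf_lt_iff.mp hlt
      obtain ⟨hyS, hy⟩ := iInf_lt_iff.mp hy'
      exact ⟨y, hyS, fun u hu => le_trans hy.le (add_le_add_left (iInf₂_le u hu) _)⟩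
  choose! f hf1 hf2 using key
  -- the sequence
  let g : ℕ → X := fun n => Nat.rec x (fun n z => f n z) n
  have hg0 : g 0 = x := rfl
  have hgs : ∀ n, g (n + 1) = f n (g n) := fun n => rfl
  have h1 : ∀ n, F (g (n + 1)) + L * edist (g n) (g (n + 1)) ≤ F (g n) := by
    intro n; rw [hgs]; exact hf1 n (g n)
  have h2 : ∀ n u, F u + L * edist (g n) u ≤ F (g n) →
      F (g (n + 1)) ≤ F u + (2⁻¹ : ENNReal) ^ (n + 1) := by
    intro n u hu; rw [hgs]; exact hf2 n (g n) u hu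
  have hdec : ∀ n, F (g (n + 1)) ≤ F (g n) := fun n =>
    le_trans le_self_add (h1 n)
  have hanti : Antitone fun n => F (g n) := antitone_nat_of_succ_le hdec
  -- partial sums bound
  have hsum : ∀ n, F (g n) + ∑ k ∈ Finset.range n, L * edist (g k) (g (k + 1)) ≤ F x := by
    intro n
    induction n with
    | zero => simp [hg0]
    | succ n ih =>
      rw [Finset.sum_range_succ]
      calc F (g (n + 1)) + (∑ k ∈ Finset.range n, L * edist (g k) (g (k + 1))
              + L * edist (g n) (g (n + 1)))
          = (F (g (n + 1)) + L * edist (g n) (g (n + 1)))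
              + ∑ k ∈ Finset.range n, L * edist (g k) (g (k + 1)) := by ring
        _ ≤ F (g n) + ∑ k ∈ Finset.range n, L * edist (g k) (g (k + 1)) :=
            add_le_add_left (h1 n) _
        _ ≤ F x := ih
  have hSsum : ∀ n, ∑ k ∈ Finset.range n, L * edist (g k) (g (k + 1)) ≤ ENNReal.ofReal ε := by
    intro n
    have hmle : m ≤ F (g n) := iInf_le _ _
    have : m + ∑ k ∈ Finset.range n, L * edist (g k) (g (k + 1)) ≤ m + ENNReal.ofReal ε :=
      le_trans (add_le_add_left hmle _) (le_trans (hsum n) hx)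
    exact (ENNReal.add_le_add_iff_left hm_ne).1 this
  have htsum : L * ∑' k, edist (g k) (g (k + 1)) ≤ ENNReal.ofReal ε := by
    rw [← ENNReal.tsum_mul_left]
    exact ENNReal.tsum_le_of_sum_range_le hSsum
  have htsum' : ∑' k, edist (g k) (g (k + 1)) ≤ L := by
    have h' : (∑' k, edist (g k) (g (k + 1))) * L ≤ ENNReal.ofReal ε := by
      rwa [mul_comm] at htsum
    calc ∑' k, edist (g k) (g (k + 1)) ≤ ENNReal.ofReal ε / L :=
          (ENNReal.le_div_iff_mul_le (Or.inl hL0) (Or.inl hLtop)).2 h'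
      _ = L := by
        rw [hLdef, ← ENNReal.ofReal_div_of_pos hsε, Real.div_sqrt]
  have htne : ∑' k, edist (g k) (g (k + 1)) ≠ ⊤ :=
    (lt_of_le_of_lt htsum' hLtop.lt_top).ne
  have hcauchy : CauchySeq g :=
    cauchySeq_of_edist_le_of_tsum_ne_top _ (fun n => le_refl _) htne
  obtain ⟨v, hgv⟩ := cauchySeq_tendsto_of_complete hcauchy
  refine ⟨v, ?_, ?_⟩
  · -- distance bound
    have hev : edist x v ≤ ∑' k, edist (g k) (g (k + 1)) := by
      rw [← hg0]
      exact edist_le_tsum_of_edist_le_of_tendsto₀ _ (fun n => le_refl _) hgv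
    have : edist x v ≤ ENNReal.ofReal (Real.sqrt ε) := le_trans hev htsum'
    rw [dist_edist]
    exact ENNReal.toReal_le_of_le_ofReal hsε.le this
  · -- variational inequality
    -- chain property
    have hchain : ∀ n m, n ≤ m → F (g m) + L * edist (g n) (g m) ≤ F (g n) := by
      intro n m hnm
      induction m, hnm using Nat.le_induction with
      | base => simp
      | succ m hnm ih =>
        calc F (g (m + 1)) + L * edist (g n) (g (m + 1))
            ≤ F (g (m + 1)) + L * (edist (g n) (g m) + edist (g m) (g (m + 1))) := by
              gcongr; exact edist_triangle _ _ _
          _ = (F (g (m + 1)) + L * edist (g m) (g (m + 1))) + L * edist (g n) (g m) := by ring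
          _ ≤ F (g m) + L * edist (g n) (g m) := add_le_add_left (h1 m) _
          _ ≤ F (g n) := ih
    have hclosed : ∀ (c : X) (t : ENNReal), IsClosed {y | F y + L * edist c y ≤ t} := by
      intro c t
      have hlsc : LowerSemicontinuous fun y => F y + L * edist c y :=
        hF.add (((ENNReal.continuous_const_mul hLtop).comp
          (continuous_const.edist continuous_id)).lowerSemicontinuous)
      exact hlsc.isClosed_preimage t
    have hvS : ∀ n, F v + L * edist (g n) v ≤ F (g n) := by
      intro n
      refine (hclosed (g n) (F (g n))).mem_of_tendsto hgv ?_
      filter_upwards [Filter.eventually_ge_atTop n] with m hm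
      exact hchain n m hm
    intro w
    rw [ENNReal.ofReal_mul hsε.le, ← edist_dist]
    by_contra hcon
    push_neg at hcon
    have hwS : ∀ n, F w + L * edist (g n) w ≤ F (g n) := by
      intro n
      calc F w + L * edist (g n) w
          ≤ F w + L * (edist (g n) v + edist v w) := by gcongr; exact edist_triangle _ _ _
        _ = (F w + L * edist v w) + L * edist (g n) v := by ring
        _ ≤ F v + L * edist (g n) v := add_le_add_left hcon.le _
        _ ≤ F (g n) := hvS n
    have hFvw : F v ≤ F w := by
      have hstep : ∀ n, F v ≤ F w + (2⁻¹ : ENNReal) ^ (n + 1) := by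
        intro n
        have hCcl : IsClosed {y | F y ≤ F w + (2⁻¹ : ENNReal) ^ (n + 1)} :=
          hF.isClosed_preimage _
        refine hCcl.mem_of_tendsto hgv ?_
        filter_upwards [Filter.eventually_ge_atTop (n + 1)] with m hm
        exact le_trans (hanti hm) (h2 n w (hwS n))
      have htend : Filter.Tendsto (fun n : ℕ => F w + (2⁻¹ : ENNReal) ^ (n + 1))
          Filter.atTop (nhds (F w)) := by
        have : Filter.Tendsto (fun n : ℕ => (2⁻¹ : ENNReal) ^ (n + 1))
            Filter.atTop (nhds 0) := by
          have h := ENNReal.tendsto_pow_atTop_nhds_zero_of_lt_one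
            (by norm_num : (2⁻¹ : ENNReal) < 1)
          exact h.comp (Filter.tendsto_add_atTop_nat 1)
        simpa using (tendsto_const_nhds.add this)
      exact ge_of_tendsto' htend hstep
    exact absurd (hcon.trans_le (hFvw.trans le_self_add)) (lt_irrefl _)
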